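/- Let x_n be defined by x_1 = 3 and, for n ≥ 2, x_n being the smallest integer greater than x_{n-1} with v_2(x_n) = v_2(n). Then for every n ≥ 1, the binary expansion of x_n does not begin with the digits 10; equivalently, writing x_n with most significant bit 2^k, one has x_n ≥ 2^k + 2^{k-1}. -/
import Mathlib

lemma valEq {v m : ℕ} (hm : m ≠ 0) (h1 : 2 ^ v ∣ m) (h2 : ¬ 2 ^ (v + 1) ∣ m) :
    padicValNat 2 m = v := by
  have : Fact (Nat.Prime 2) := ⟨Nat.prime_two⟩
  have hle : v ≤ padicValNat 2 m := (padicValNat_dvd_iff_le hm).mp h1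
  have hlt : padicValNat 2 m < v + 1 := by
    by_contra h
    exact h2 ((padicValNat_dvd_iff_le hm).mpr (not_lt.mp h))
  omega

lemma valAdd {n k : ℕ} (hn : 1 ≤ n) (hk : n < 2 ^ (k + 1)) :
    padicValNat 2 (n + 2 ^ (k + 1)) = padicValNat 2 n := by
  have : Fact (Nat.Prime 2) := ⟨Nat.prime_two⟩
  set v := padicValNat 2 n with hv
  have hd : 2 ^ v ∣ n := pow_padicValNat_dvd
  have hnd : ¬ 2 ^ (v + 1) ∣ n := pow_succ_padicValNat_not_dvd (by omega)
  have hvk : v + 1 ≤ k + 1 := by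
    have h1 := Nat.le_of_dvd (by omega) hd
    by_contra h
    have h2 : k + 1 ≤ v := by omega
    have := Nat.pow_le_pow_right (by norm_num : 0 < 2) h2
    omega
  apply valEq (by positivity)
  · exact Nat.dvd_add hd (pow_dvd_pow 2 (by omega))
  · intro h
    exact hnd ((Nat.dvd_add_iff_left (pow_dvd_pow 2 hvk)).mpr h)

lemma logpred {n L : ℕ} (h2 : 2 ≤ n) (hL : L = Nat.log 2 n) (hne : n ≠ 2 ^ L) :
    Nat.log 2 (n - 1) = L := by
  have hlo : 2 ^ L ≤ n := hL ▸ Nat.pow_log_le_self 2 (by omega)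
  have hhi : n < 2 ^ (L + 1) := hL ▸ Nat.lt_pow_succ_log_self one_lt_two n
  exact Nat.log_eq_of_pow_le_of_lt_pow (by omega) (by omega)

theorem stmt11_aux (x : ℕ → ℕ) (h1 : x 1 = 3)
    (hrec : ∀ n, 2 ≤ n →
      IsLeast {m : ℕ | x (n - 1) < m ∧ padicValNat 2 m = padicValNat 2 n} (x n)) :
    ∀ n, 1 ≤ n → x n = n + 2 ^ (Nat.log 2 n + 1) := by
  intro n
  induction n using Nat.strong_induction_on with
  | _ n ih =>
    intro hn
    rcases Nat.lt_or_ge n 2 with h | h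
    · interval_cases n
      simpa using h1
    · -- n ≥ 2
      set L := Nat.log 2 n with hL
      have hlo : 2 ^ L ≤ n := Nat.pow_log_le_self 2 (by omega)
      have hhi : n < 2 ^ (L + 1) := Nat.lt_pow_succ_log_self one_lt_two n
      have hleast := hrec n h
      have hc : padicValNat 2 (n + 2 ^ (L + 1)) = padicValNat 2 n :=
        valAdd (by omega) hhi
      by_cases hne : n = 2 ^ L
      · -- power of 2 case
        have hL1 : 1 ≤ L := by
          by_contra hLe
          interval_cases L <;> omega
        have hlog : Nat.log 2 (n - 1) = L - 1 := by
          apply Nat.log_eq_of_pow_le_of_lt_pow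
          · have : 2 ^ (L - 1) < 2 ^ L := Nat.pow_lt_pow_right one_lt_two (by omega)
            omega
          · have : 2 ^ (L - 1 + 1) = 2 ^ L := by congr 1; omega
            omega
        have hxp : x (n - 1) = (n - 1) + 2 ^ (L - 1 + 1) := by
          rw [ih (n - 1) (by omega) (by omega), hlog]
        have hxp' : x (n - 1) = 2 * n - 1 := by
          have : 2 ^ (L - 1 + 1) = 2 ^ L := by congr 1; omega
          omega
        have : Fact (Nat.Prime 2) := ⟨Nat.prime_two⟩
        have hval : padicValNat 2 n = L := by
          rw [hne]; exact padicValNat.prime_pow L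
        have hmem : x (n - 1) < n + 2 ^ (L + 1) ∧
            padicValNat 2 (n + 2 ^ (L + 1)) = padicValNat 2 n := by
          constructor
          · omega
          · exact hc
        have hlb : ∀ m ∈ {m : ℕ | x (n - 1) < m ∧ padicValNat 2 m = padicValNat 2 n},
            n + 2 ^ (L + 1) ≤ m := by
          rintro m ⟨hm1, hm2⟩
          have hm0 : m ≠ 0 := by
            intro h0; rw [h0] at hm1; omega
          have hdv : 2 ^ L ∣ m := by
            have := pow_padicValNat_dvd (p := 2) (n := m)
            rwa [hm2, hval] at this
          have : Fact (Nat.Prime 2) := ⟨Nat.prime_two⟩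
          have hnd : ¬ 2 ^ (L + 1) ∣ m := by
            have := pow_succ_padicValNat_not_dvd (p := 2) (n := m) hm0
            rwa [hm2, hval] at this
          obtain ⟨q, hq⟩ := hdv
          have hqodd : q % 2 = 1 := by
            rcases Nat.even_or_odd q with he | ho
            · exfalso
              apply hnd
              obtain ⟨r, hr⟩ := he
              exact ⟨r, by rw [hq, hr]; ring⟩
            · exact Nat.odd_iff.mp ho
          have hq3 : 3 ≤ q := by
            by_contra hq3
            have hq1 : q = 1 := by omega
            rw [hq, hq1, Nat.mul_one] at hm1
            omega
          have hcalc : n + 2 ^ (L + 1) = 3 * 2 ^ L := by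
            rw [hne, pow_succ]; ring
          calc n + 2 ^ (L + 1) = 3 * 2 ^ L := hcalc
            _ ≤ 2 ^ L * q := by nlinarith
            _ = m := hq.symm
        exact hleast.unique ⟨hmem, hlb⟩
      · -- non-power case: candidate is x(n-1)+1
        have hlog : Nat.log 2 (n - 1) = L := logpred h hL hne
        have hxp : x (n - 1) = (n - 1) + 2 ^ (L + 1) := by
          rw [ih (n - 1) (by omega) (by omega), hlog]
        have hmem : x (n - 1) < n + 2 ^ (L + 1) ∧
            padicValNat 2 (n + 2 ^ (L + 1)) = padicValNat 2 n := ⟨by omega, hc⟩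
        have hlb : ∀ m ∈ {m : ℕ | x (n - 1) < m ∧ padicValNat 2 m = padicValNat 2 n},
            n + 2 ^ (L + 1) ≤ m := by
          rintro m ⟨hm1, _⟩
          omega
        exact hleast.unique ⟨hmem, hlb⟩

/-- For the minimal recursive sequence starting at `3` (w.r.t. 2-adic valuation),
the binary expansion of `x n` does not begin with `10`: writing the most
significant bit of `x n` as `2^k` (so `k = Nat.log 2 (x n)`), one has
`x n ≥ 2^k + 2^(k-1)`. -/
theorem stmt11 (x : ℕ → ℕ) (h1 : x 1 = 3)
    (hrec : ∀ n, 2 ≤ n →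
      IsLeast {m : ℕ | x (n - 1) < m ∧ padicValNat 2 m = padicValNat 2 n} (x n)) :
    ∀ n, 1 ≤ n →
      2 ^ (Nat.log 2 (x n)) + 2 ^ (Nat.log 2 (x n) - 1) ≤ x n := by
  intro n hn
  have hx := stmt11_aux x h1 hrec n hn
  set L := Nat.log 2 n with hL
  have hlo : 2 ^ L ≤ n := Nat.pow_log_le_self 2 (by omega)
  have hhi : n < 2 ^ (L + 1) := Nat.lt_pow_succ_log_self one_lt_two n
  have hlog : Nat.log 2 (x n) = L + 1 := by
    apply Nat.log_eq_of_pow_le_of_lt_pow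
    · omega
    · have : 2 ^ (L + 1 + 1) = 2 ^ (L + 1) + 2 ^ (L + 1) := by ring
      omega
  rw [hlog]
  simp only [Nat.add_sub_cancel]
  omega
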